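/- Let B be a q×q symmetric matrix with strictly positive entries, let c ∈ ℝ^q have strictly positive entries, and let v*_∅ be the unique minimizer (with strictly positive entries) of the infimum defining λ_∅. If λ_max(diag(c)^{1/2} B diag(c)^{1/2} − diag(v*_∅)^{-1}) = 0, then v*_∅ = 1_q. -/

import Mathlib

open MeasureTheory ProbabilityTheory Matrix
noncomputable section
/-- squared ℓ² norm of a real vector -/
def nsqR {q : ℕ} (v : Fin q → ℝ) : ℝ := ∑ i, v i ^ 2

/-- Rayleigh quotient ⟨v, M v⟩ of a real matrix at a vector -/
def rayR {q : ℕ} (M : Matrix (Fin q) (Fin q) ℝ) (v : Fin q → ℝ) : ℝ := v ⬝ᵥ M.mulVec v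

/-- largest eigenvalue of a real symmetric matrix, characterized as the supremum of the
Rayleigh quotient over ℓ²-unit vectors -/
def lmaxR {q : ℕ} (M : Matrix (Fin q) (Fin q) ℝ) : ℝ :=
  sSup {x | ∃ v, nsqR v = 1 ∧ x = rayR M v}

/-- the quantity λ = inf_{v > 0} max{λ_max(diag(c)^{1/2} B diag(c)^{1/2} +
diag(B diag(c)(v - 1))), λ_max(diag(v)⁻¹ + diag(B diag(c)(v - 1)))} -/
def lamVal {q : ℕ} (B : Matrix (Fin q) (Fin q) ℝ) (c : Fin q → ℝ) : ℝ :=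
  sInf {x | ∃ v : Fin q → ℝ, (∀ k, 0 < v k) ∧
    x = max
      (lmaxR (Matrix.diagonal (fun k => Real.sqrt (c k)) * B *
          Matrix.diagonal (fun k => Real.sqrt (c k)) +
        Matrix.diagonal ((B * Matrix.diagonal c).mulVec (v - 1))))
      (lmaxR (Matrix.diagonal (fun k => (v k)⁻¹) +
        Matrix.diagonal ((B * Matrix.diagonal c).mulVec (v - 1))))}

/-- the quantity λ_∅ = inf_{v > 0} λ_max(diag(v)⁻¹ + diag(B diag(c)(v - 1))) -/
def lamNull {q : ℕ} (B : Matrix (Fin q) (Fin q) ℝ) (c : Fin q → ℝ) : ℝ :=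
  sInf {x | ∃ v : Fin q → ℝ, (∀ k, 0 < v k) ∧
    x = lmaxR (Matrix.diagonal (fun k => (v k)⁻¹) +
      Matrix.diagonal ((B * Matrix.diagonal c).mulVec (v - 1)))}


namespace PBaux

variable {q : ℕ}

lemma rayR_eq (M : Matrix (Fin q) (Fin q) ℝ) (x : Fin q → ℝ) :
    rayR M x = ∑ k, ∑ l, x k * M k l * x l := by
  simp [rayR, dotProduct, mulVec, Finset.mul_sum, mul_assoc]

lemma nsqR_basis (k : Fin q) : nsqR (fun i => if i = k then (1:ℝ) else 0) = 1 := by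
  simp [nsqR, apply_ite (·^2 : ℝ → ℝ)]

lemma bddAbove_rayset (M : Matrix (Fin q) (Fin q) ℝ) :
    BddAbove {x | ∃ v, nsqR v = 1 ∧ x = rayR M v} := by
  refine ⟨∑ k, ∑ l, |M k l|, ?_⟩
  rintro x ⟨y, hy, rfl⟩
  have habs : ∀ i, |y i| ≤ 1 := by
    intro i
    have h1 : y i ^ 2 ≤ 1 := by
      rw [← hy]
      exact Finset.single_le_sum (f := fun i => y i ^2) (fun j _ => sq_nonneg _)
        (Finset.mem_univ i)
    exact (sq_le_one_iff_abs_le_one _).mp h1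
  rw [rayR_eq]
  refine Finset.sum_le_sum fun k _ => Finset.sum_le_sum fun l _ => ?_
  calc y k * M k l * y l ≤ |y k * M k l * y l| := le_abs_self _
    _ = |y k| * |M k l| * |y l| := by rw [abs_mul, abs_mul]
    _ ≤ 1 * |M k l| * 1 := by
        apply mul_le_mul (mul_le_mul (habs k) le_rfl (abs_nonneg _) zero_le_one) (habs l)
          (abs_nonneg _)
        positivity
    _ = |M k l| := by ring

lemma le_lmaxR (M : Matrix (Fin q) (Fin q) ℝ) (y : Fin q → ℝ) (hy : nsqR y = 1) :
    rayR M y ≤ lmaxR M := le_csSup (bddAbove_rayset M) ⟨y, hy, rfl⟩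

lemma lmaxR_le (hq : 0 < q) (M : Matrix (Fin q) (Fin q) ℝ) (C : ℝ)
    (h : ∀ y, nsqR y = 1 → rayR M y ≤ C) : lmaxR M ≤ C := by
  apply csSup_le
  · exact ⟨_, ⟨_, nsqR_basis ⟨0, hq⟩, rfl⟩⟩
  · rintro x ⟨y, hy, rfl⟩; exact h y hy

lemma rayR_diag (w : Fin q → ℝ) (y : Fin q → ℝ) :
    rayR (Matrix.diagonal w) y = ∑ k, w k * y k ^ 2 := by
  rw [rayR_eq]
  apply Finset.sum_congr rfl; intro k _
  rw [Finset.sum_eq_single k]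
  · simp [Matrix.diagonal_apply_eq]; ring
  · intro l _ hl; simp [Matrix.diagonal_apply_ne' _ hl]
  · simp

lemma lmaxR_diagonal (hq : 0 < q) (w : Fin q → ℝ) :
    lmaxR (Matrix.diagonal w)
      = Finset.univ.sup' (Finset.univ_nonempty_iff.mpr ⟨⟨0, hq⟩⟩) w := by
  set m := Finset.univ.sup' (Finset.univ_nonempty_iff.mpr ⟨⟨0, hq⟩⟩) w with hm
  apply le_antisymm
  · apply lmaxR_le hq
    intro y hy
    rw [rayR_diag]
    calc ∑ k, w k * y k ^ 2 ≤ ∑ k, m * y k ^ 2 := by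
          apply Finset.sum_le_sum; intro k _
          exact mul_le_mul_of_nonneg_right (Finset.le_sup' w (Finset.mem_univ k)) (sq_nonneg _)
      _ = m * nsqR y := by rw [nsqR, Finset.mul_sum]
      _ = m := by rw [hy, mul_one]
  · obtain ⟨k, -, hk⟩ := Finset.exists_mem_eq_sup' (Finset.univ_nonempty_iff.mpr ⟨⟨0, hq⟩⟩) w
    have := le_lmaxR (Matrix.diagonal w) (fun i => if i = k then (1:ℝ) else 0) (nsqR_basis k)
    rw [rayR_diag] at this
    rw [hm, hk]
    simpa [apply_ite (·^2 : ℝ → ℝ), Finset.sum_ite_eq'] using this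

lemma rayR_smul (M : Matrix (Fin q) (Fin q) ℝ) (t : ℝ) (y : Fin q → ℝ) :
    rayR M (t • y) = t ^ 2 * rayR M y := by
  simp only [rayR_eq, Pi.smul_apply, smul_eq_mul, Finset.mul_sum]
  apply Finset.sum_congr rfl; intro k _
  apply Finset.sum_congr rfl; intro l _; ring

lemma nsqR_smul (t : ℝ) (y : Fin q → ℝ) : nsqR (t • y) = t ^ 2 * nsqR y := by
  simp only [nsqR, Pi.smul_apply, smul_eq_mul, Finset.mul_sum, mul_pow]

lemma rayR_nonpos_of_unit (M : Matrix (Fin q) (Fin q) ℝ)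
    (h : ∀ y, nsqR y = 1 → rayR M y ≤ 0) (y : Fin q → ℝ) : rayR M y ≤ 0 := by
  rcases eq_or_lt_of_le (show (0:ℝ) ≤ nsqR y from Finset.sum_nonneg fun i _ => sq_nonneg _)
    with h0 | hpos
  · have hy : ∀ i, y i = 0 := by
      intro i
      have := (Finset.sum_eq_zero_iff_of_nonneg (fun i _ => sq_nonneg (y i))).mp h0.symm i
        (Finset.mem_univ i)
      exact pow_eq_zero_iff (n := 2) (by norm_num) |>.mp this
    have : y = 0 := funext hy
    subst this
    simp [rayR_eq]
  · set t : ℝ := (Real.sqrt (nsqR y))⁻¹ with ht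
    have hs : Real.sqrt (nsqR y) > 0 := Real.sqrt_pos.mpr hpos
    have hunit : nsqR (t • y) = 1 := by
      rw [nsqR_smul, ht, ← Real.sq_sqrt hpos.le]
      field_simp
      rw [Real.sqrt_sq hs.le]
    have := h (t • y) hunit
    rw [rayR_smul] at this
    have ht2 : 0 < t ^ 2 := by positivity
    nlinarith

lemma dot_mulVec_symm (M : Matrix (Fin q) (Fin q) ℝ) (hsym : M.IsSymm) (a d : Fin q → ℝ) :
    a ⬝ᵥ M.mulVec d = d ⬝ᵥ M.mulVec a := by
  rw [dotProduct_mulVec a M d, dotProduct_comm]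
  congr 1
  rw [← Matrix.vecMul_transpose, hsym.eq]

lemma rayR_add (M : Matrix (Fin q) (Fin q) ℝ) (hsym : M.IsSymm) (a d : Fin q → ℝ) :
    rayR M (a + d) = rayR M a + 2 * (d ⬝ᵥ M.mulVec a) + rayR M d := by
  have hcross := dot_mulVec_symm M hsym a d
  simp only [rayR, mulVec_add, dotProduct_add, add_dotProduct]
  rw [hcross]; ring

lemma mulVec_eq_zero_of_ray_zero (M : Matrix (Fin q) (Fin q) ℝ) (hsym : M.IsSymm)
    (hle : ∀ y, rayR M y ≤ 0) (z : Fin q → ℝ) (hz : rayR M z = 0) :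
    ∀ k, M.mulVec z k = 0 := by
  intro k
  by_contra hb
  set b := M.mulVec z k with hbdef
  set e : Fin q → ℝ := Pi.single k 1 with he
  have hkey : ∀ s : ℝ, 2 * (s * b) + s ^ 2 * rayR M e ≤ 0 := by
    intro s
    have h1 := hle (z + s • e)
    rw [rayR_add M hsym, hz, rayR_smul] at h1
    have h2 : (s • e) ⬝ᵥ M.mulVec z = s * b := by
      simp [he, Pi.single_apply, dotProduct, Finset.sum_ite_eq, hbdef, mulVec]
    rw [h2] at h1; linarith
  set C := rayR M e with hC
  set ε : ℝ := (|C| + 1)⁻¹ with hε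
  have hεpos : 0 < ε := by positivity
  have hεC : ε * (|C| + 1) = 1 := by
    rw [hε]; field_simp
  have hb2 : 0 < b ^ 2 := by positivity
  have hεabs : ε * |C| ≤ 1 := by nlinarith
  have hεε : ε * ε ≤ ε := by nlinarith [abs_nonneg C]
  have h4 := hkey (b * ε)
  have e2 : (b * ε) ^ 2 * |C| ≤ b ^ 2 * ε := by
    have := mul_le_mul_of_nonneg_left hεabs (mul_pos hb2 hεpos).le
    nlinarith
  have h5 : (b * ε) ^ 2 * C ≥ -(b ^ 2 * ε) := by nlinarith [neg_abs_le C, sq_nonneg (b * ε)]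
  nlinarith [mul_pos hb2 hεpos]

/-- entry of B ⬝ diag c applied to (w - 1) -/
lemma mulVecBD (B : Matrix (Fin q) (Fin q) ℝ) (c w : Fin q → ℝ) (k : Fin q) :
    ((B * Matrix.diagonal c).mulVec (w - 1)) k = ∑ l, B k l * c l * (w l - 1) := by
  simp [mulVec, dotProduct, Matrix.mul_diagonal]

lemma rayR_le_abs (M : Matrix (Fin q) (Fin q) ℝ) (hoff : ∀ k l, k ≠ l → 0 ≤ M k l)
    (y : Fin q → ℝ) : rayR M y ≤ rayR M (fun k => |y k|) := by
  rw [rayR_eq, rayR_eq]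
  apply Finset.sum_le_sum; intro k _
  apply Finset.sum_le_sum; intro l _
  by_cases hkl : k = l
  · subst hkl
    have h := abs_mul_abs_self (y k)
    exact le_of_eq (by linear_combination (-(M k k)) * h)
  · have hM := hoff k l hkl
    calc y k * M k l * y l ≤ |y k * M k l * y l| := le_abs_self _
      _ = |y k| * |M k l| * |y l| := by rw [abs_mul, abs_mul]
      _ = |y k| * M k l * |y l| := by rw [abs_of_nonneg hM]

lemma nsqR_abs (y : Fin q → ℝ) : nsqR (fun k => |y k|) = nsqR y := by
  simp [nsqR, sq_abs]

end PBaux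

open PBaux

set_option maxHeartbeats 1000000 in
/-- Lemma: on the phase boundary the minimizer of λ_∅ is the
all-ones vector. -/
theorem phase_boundary_minimizer {q : ℕ} (hq : 0 < q)
    (B : Matrix (Fin q) (Fin q) ℝ) (hBsym : B.IsSymm) (hBpos : ∀ k l, 0 < B k l)
    (c : Fin q → ℝ) (hc : ∀ k, 0 < c k)
    (v : Fin q → ℝ) (hv : ∀ k, 0 < v k)
    (hmin : lmaxR (Matrix.diagonal (fun k => (v k)⁻¹) +
      Matrix.diagonal ((B * Matrix.diagonal c).mulVec (v - 1))) = lamNull B c)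
    (hzero : lmaxR (Matrix.diagonal (fun k => Real.sqrt (c k)) * B *
        Matrix.diagonal (fun k => Real.sqrt (c k)) -
      Matrix.diagonal (fun k => (v k)⁻¹)) = 0) :
    v = 1 := by
  have hne : (Finset.univ : Finset (Fin q)).Nonempty := ⟨⟨0, hq⟩, Finset.mem_univ _⟩
  set G : (Fin q → ℝ) → Fin q → ℝ :=
    fun w k => (w k)⁻¹ + ∑ l, B k l * c l * (w l - 1) with hG
  set F : (Fin q → ℝ) → ℝ := fun w => Finset.univ.sup' hne (G w) with hF
  have hlmax : ∀ w : Fin q → ℝ, lmaxR (Matrix.diagonal (fun k => (w k)⁻¹) +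
      Matrix.diagonal ((B * Matrix.diagonal c).mulVec (w - 1))) = F w := by
    intro w
    rw [Matrix.diagonal_add, lmaxR_diagonal hq]
    have hfun : (fun i => (w i)⁻¹ + ((B * Matrix.diagonal c).mulVec (w - 1)) i) = G w := by
      funext k
      simp only [hG, mulVecBD]
    rw [hfun]
  have hmem : ∀ w : Fin q → ℝ, (∀ k, 0 < w k) → F w ∈ {x | ∃ v' : Fin q → ℝ,
      (∀ k, 0 < v' k) ∧ x = lmaxR (Matrix.diagonal (fun k => (v' k)⁻¹) +
      Matrix.diagonal ((B * Matrix.diagonal c).mulVec (v' - 1)))} :=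
    fun w hw => ⟨w, hw, (hlmax w).symm⟩
  have hGlb : ∀ (w : Fin q → ℝ), (∀ k, 0 < w k) → ∀ k, -(∑ i, ∑ l, B i l * c l) ≤ G w k := by
    intro w hw k
    have h1 : ∀ l, - (B k l * c l) ≤ B k l * c l * (w l - 1) := by
      intro l
      have hlt := mul_pos (hBpos k l) (hc l)
      have := mul_pos hlt (hw l)
      nlinarith
    have h2 : -(∑ l, B k l * c l) ≤ ∑ l, B k l * c l * (w l - 1) := by
      rw [← Finset.sum_neg_distrib]
      exact Finset.sum_le_sum fun l _ => h1 l
    have h3 : (∑ l, B k l * c l) ≤ ∑ i, ∑ l, B i l * c l := by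
      exact Finset.single_le_sum (f := fun i => ∑ l, B i l * c l)
        (fun i _ => Finset.sum_nonneg fun l _ => (mul_pos (hBpos i l) (hc l)).le)
        (Finset.mem_univ k)
    have h4 : 0 < (w k)⁻¹ := inv_pos.mpr (hw k)
    simp only [hG]
    linarith
  have hbdd : BddBelow {x | ∃ v' : Fin q → ℝ,
      (∀ k, 0 < v' k) ∧ x = lmaxR (Matrix.diagonal (fun k => (v' k)⁻¹) +
      Matrix.diagonal ((B * Matrix.diagonal c).mulVec (v' - 1)))} := by
    refine ⟨-(∑ i, ∑ l, B i l * c l), ?_⟩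
    rintro x ⟨w, hw, rfl⟩
    rw [hlmax w]
    exact le_trans (hGlb w hw ⟨0, hq⟩) (Finset.le_sup' (G w) (Finset.mem_univ ⟨0, hq⟩))
  have hlamle : ∀ w : Fin q → ℝ, (∀ k, 0 < w k) → lamNull B c ≤ F w :=
    fun w hw => csInf_le hbdd (hmem w hw)
  have hFv : F v = lamNull B c := by rw [← hlmax v]; exact hmin
  -- activity
  have hact : ∀ k, G v k = F v := by
    intro j
    by_contra hj
    have hlt : G v j < F v := lt_of_le_of_ne (Finset.le_sup' (G v) (Finset.mem_univ j)) hj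
    set δ : ℝ := F v - G v j with hδ
    have hδpos : 0 < δ := by simp only [hδ]; linarith
    set ε : ℝ := min (v j / 2) (δ * (v j) ^ 2 / 4) with hε
    have hεpos : 0 < ε := by
      apply lt_min
      · linarith [hv j]
      · have := hv j; positivity
    have hε1 : ε ≤ v j / 2 := min_le_left _ _
    have hε2 : ε ≤ δ * (v j) ^ 2 / 4 := min_le_right _ _
    set w : Fin q → ℝ := fun k => v k - (if k = j then ε else 0) with hwdef
    have hw : ∀ k, 0 < w k := by
      intro k
      simp only [hwdef]
      by_cases hkj : k = j
      · rw [if_pos hkj, hkj]; linarith [hv j]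
      · rw [if_neg hkj]; simpa using hv k
    have hsum : ∀ k, ∑ l, B k l * c l * (w l - 1)
        = (∑ l, B k l * c l * (v l - 1)) - ε * (B k j * c j) := by
      intro k
      have h1 : ∀ l, B k l * c l * (w l - 1)
          = B k l * c l * (v l - 1) - B k l * c l * (if l = j then ε else 0) := by
        intro l
        simp only [hwdef]
        ring
      rw [Finset.sum_congr rfl (fun l _ => h1 l), Finset.sum_sub_distrib]
      simp only [mul_ite, mul_zero]
      rw [Finset.sum_ite_eq' Finset.univ j (fun l => B k l * c l * ε)]
      simp only [Finset.mem_univ, ite_true]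
      ring
    have hGw : ∀ k, G w k < F v := by
      intro k
      by_cases hkj : k = j
      · subst hkj
        have hwk : w k = v k - ε := by simp [hwdef]
        have hwkpos : 0 < v k - ε := by rw [← hwk]; exact hw k
        have hinv : (v k - ε)⁻¹ ≤ (v k)⁻¹ + δ / 2 := by
          have hvk := hv k
          rw [← sub_le_iff_le_add']
          have hid : (v k - ε)⁻¹ - (v k)⁻¹ = ε / ((v k - ε) * v k) := by
            field_simp
            ring
          rw [hid, div_le_iff₀ (by positivity)]
          nlinarith
        have hBc : 0 < ε * (B k k * c k) := by
          have := mul_pos (hBpos k k) (hc k); positivity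
        simp only [hG, hsum, hwk]
        have hgv : G v k = (v k)⁻¹ + ∑ l, B k l * c l * (v l - 1) := rfl
        have hδeq : F v = δ + G v k := by rw [hδ]; ring
        rw [hgv] at hδeq
        linarith
      · have hwk : w k = v k := by simp [hwdef, hkj]
        have hBc : 0 < ε * (B k j * c j) := by
          have := mul_pos (hBpos k j) (hc j); positivity
        have hGv : G v k ≤ F v := Finset.le_sup' (G v) (Finset.mem_univ k)
        have : G w k = G v k - ε * (B k j * c j) := by
          simp only [hG, hsum, hwk]
          ring
        rw [this]
        linarith
    have hFw : F w < F v := by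
      rw [hF]
      exact (Finset.sup'_lt_iff hne).mpr fun k _ => hGw k
    have := hlamle w hw
    rw [← hFv] at this
    linarith
  -- F v ≤ 1
  have hlam1 : F v ≤ 1 := by
    have hF1 : F (1 : Fin q → ℝ) = 1 := by
      have : G (1 : Fin q → ℝ) = fun _ => 1 := by
        funext k
        simp [hG]
      rw [hF]
      simp only [this]
      exact Finset.sup'_const hne 1
    rw [hFv, ← hF1]
    exact hlamle 1 (fun k => one_pos)
  -- the boundary matrix
  set A : Matrix (Fin q) (Fin q) ℝ := Matrix.diagonal (fun k => Real.sqrt (c k)) * B *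
      Matrix.diagonal (fun k => Real.sqrt (c k)) - Matrix.diagonal (fun k => (v k)⁻¹) with hA
  have hAentry : ∀ k l, A k l = Real.sqrt (c k) * B k l * Real.sqrt (c l) -
      (if k = l then (v k)⁻¹ else 0) := by
    intro k l
    rw [hA, Matrix.sub_apply, Matrix.mul_diagonal, Matrix.diagonal_mul, Matrix.diagonal_apply]
  have hAoff : ∀ k l, k ≠ l → 0 < A k l := by
    intro k l hkl
    rw [hAentry, if_neg hkl, sub_zero]
    have h1 : 0 < Real.sqrt (c k) := Real.sqrt_pos.mpr (hc k)
    have h2 : 0 < Real.sqrt (c l) := Real.sqrt_pos.mpr (hc l)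
    have := hBpos k l
    positivity
  have hAsym : A.IsSymm := by
    apply Matrix.IsSymm.ext
    intro i j
    rw [hAentry, hAentry, hBsym.apply i j]
    by_cases hij : i = j
    · subst hij; ring
    · rw [if_neg (fun h => hij h.symm), if_neg hij]; ring
  have hzeroA : lmaxR A = 0 := hzero
  have hAneg : ∀ y, rayR A y ≤ 0 := by
    apply rayR_nonpos_of_unit
    intro y hy
    have h := le_lmaxR A y hy
    rw [hzeroA] at h
    exact h
  set x : Fin q → ℝ := fun k => Real.sqrt (c k) * (v k - 1) with hx
  set lam : ℝ := F v with hlam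
  have hmvx : ∀ k, A.mulVec x k = Real.sqrt (c k) * (lam - 1) := by
    intro k
    have hsq : ∀ l, Real.sqrt (c l) * Real.sqrt (c l) = c l :=
      fun l => Real.mul_self_sqrt (hc l).le
    have h1 : A.mulVec x k = ∑ l, (Real.sqrt (c k) * B k l * Real.sqrt (c l)
        - (if k = l then (v k)⁻¹ else 0)) * (Real.sqrt (c l) * (v l - 1)) := by
      simp only [mulVec, dotProduct, hAentry, hx]
    rw [h1]
    have h2 : ∀ l, (Real.sqrt (c k) * B k l * Real.sqrt (c l)
        - (if k = l then (v k)⁻¹ else 0)) * (Real.sqrt (c l) * (v l - 1))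
        = Real.sqrt (c k) * (B k l * c l * (v l - 1))
          - (if l = k then (v k)⁻¹ * (Real.sqrt (c k) * (v k - 1)) else 0) := by
      intro l
      have hs := hsq l
      by_cases hkl : l = k
      · subst hkl
        rw [if_pos rfl, if_pos rfl]
        set s := Real.sqrt (c l) with hsdef
        rw [← hs]
        ring
      · rw [if_neg (fun h => hkl h.symm), if_neg hkl]
        set s := Real.sqrt (c l) with hsdef
        rw [← hs]
        ring
    rw [Finset.sum_congr rfl (fun l _ => h2 l), Finset.sum_sub_distrib,
      Finset.sum_ite_eq' Finset.univ k (fun _ => (v k)⁻¹ * (Real.sqrt (c k) * (v k - 1))),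
      ← Finset.mul_sum]
    simp only [Finset.mem_univ, ite_true]
    have hsum1 : ∑ l, B k l * c l * (v l - 1) = lam - (v k)⁻¹ := by
      have hrfl : G v k = (v k)⁻¹ + ∑ l, B k l * c l * (v l - 1) := rfl
      have hgk := hact k
      rw [hrfl] at hgk
      linarith [hgk]
    rw [hsum1]
    have hvk := (hv k).ne'
    field_simp
    ring
  -- lam = 1
  have hlameq : lam = 1 := by
    by_contra hne1
    set m : ℝ := Finset.univ.inf' hne (fun k => Real.sqrt (c k)) with hm
    have hmpos : 0 < m := by
      obtain ⟨k, -, hk⟩ := Finset.exists_mem_eq_inf' hne (fun k => Real.sqrt (c k))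
      rw [hm, hk]
      exact Real.sqrt_pos.mpr (hc k)
    have hr0 : 0 ≤ -rayR A x := by linarith [hAneg x]
    have hCS : ∀ y : Fin q → ℝ, (y ⬝ᵥ A.mulVec x) ^ 2 ≤ (-rayR A x) * (-rayR A y) := by
      intro y
      have hquad : ∀ s : ℝ, 0 ≤ (-rayR A x) * (s * s)
          + (-(2 * (y ⬝ᵥ A.mulVec x))) * s + (-rayR A y) := by
        intro s
        have h1 := hAneg (y + s • x)
        rw [rayR_add A hAsym y (s • x), rayR_smul] at h1
        have h2 : (s • x) ⬝ᵥ A.mulVec y = s * (y ⬝ᵥ A.mulVec x) := by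
          rw [smul_dotProduct, smul_eq_mul, dot_mulVec_symm A hAsym x y]
        rw [h2] at h1
        nlinarith [h1]
      have hd := discrim_le_zero hquad
      rw [discrim] at hd
      nlinarith [hd]
    have hdotx : ∀ y : Fin q → ℝ,
        y ⬝ᵥ A.mulVec x = (lam - 1) * ∑ k, y k * Real.sqrt (c k) := by
      intro y
      simp only [dotProduct]
      rw [Finset.mul_sum]
      apply Finset.sum_congr rfl
      intro k _
      rw [hmvx k]
      ring
    have hSy : ∀ y : Fin q → ℝ, (∀ k, 0 ≤ y k) → nsqR y = 1 →
        m ≤ ∑ k, y k * Real.sqrt (c k) := by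
      intro y hy hyn
      have h2 : ∑ k, (y k) ^ 2 ≤ (∑ k, y k) ^ 2 :=
        Finset.sum_sq_le_sq_sum_of_nonneg (fun k _ => hy k)
      have h3 : (0:ℝ) ≤ ∑ k, y k := Finset.sum_nonneg fun k _ => hy k
      have hyn' : ∑ k, (y k) ^ 2 = 1 := hyn
      have h1 : 1 ≤ ∑ k, y k := by nlinarith
      calc m = m * 1 := by ring
        _ ≤ m * ∑ k, y k := mul_le_mul_of_nonneg_left h1 hmpos.le
        _ ≤ ∑ k, y k * Real.sqrt (c k) := by
            rw [Finset.mul_sum]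
            apply Finset.sum_le_sum
            intro k _
            calc m * y k ≤ Real.sqrt (c k) * y k :=
                  mul_le_mul_of_nonneg_right
                    (Finset.inf'_le (fun k => Real.sqrt (c k)) (Finset.mem_univ k)) (hy k)
              _ = y k * Real.sqrt (c k) := mul_comm _ _
    rcases eq_or_lt_of_le hr0 with hrz | hrpos
    · set y : Fin q → ℝ := fun i => if i = (⟨0, hq⟩ : Fin q) then 1 else 0 with hy
      have hyn : nsqR y = 1 := nsqR_basis _
      have hynn : ∀ k, 0 ≤ y k := by
        intro k
        rw [hy]
        dsimp only
        split <;> norm_num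
      have h1 := hCS y
      rw [← hrz, zero_mul] at h1
      have hb : y ⬝ᵥ A.mulVec x = 0 := by nlinarith [sq_nonneg (y ⬝ᵥ A.mulVec x)]
      rw [hdotx] at hb
      have hS := hSy y hynn hyn
      rcases mul_eq_zero.mp hb with h | h
      · exact hne1 (by linarith)
      · linarith
    · set η : ℝ := (lam - 1) ^ 2 * m ^ 2 / (-rayR A x) with hη
      have hlm : lam - 1 ≠ 0 := sub_ne_zero.mpr hne1
      have hηpos : 0 < η := by
        apply div_pos _ hrpos
        positivity
      have hbound : ∀ y : Fin q → ℝ, nsqR y = 1 → rayR A y ≤ -η := by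
        intro y hyn
        set ya : Fin q → ℝ := fun k => |y k| with hya
        have hyan : nsqR ya = 1 := by rw [hya, nsqR_abs, hyn]
        have hyann : ∀ k, 0 ≤ ya k := fun k => abs_nonneg _
        have h1 := hCS ya
        rw [hdotx] at h1
        have hS := hSy ya hyann hyan
        have hsq' : (lam - 1) ^ 2 * m ^ 2
            ≤ ((lam - 1) * ∑ k, ya k * Real.sqrt (c k)) ^ 2 := by
          have h2 : m ^ 2 ≤ (∑ k, ya k * Real.sqrt (c k)) ^ 2 := by nlinarith
          calc (lam - 1) ^ 2 * m ^ 2 ≤ (lam - 1) ^ 2 * (∑ k, ya k * Real.sqrt (c k)) ^ 2 :=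
                mul_le_mul_of_nonneg_left h2 (sq_nonneg _)
            _ = ((lam - 1) * ∑ k, ya k * Real.sqrt (c k)) ^ 2 := by ring
        have h3 : (lam - 1) ^ 2 * m ^ 2 ≤ (-rayR A x) * (-rayR A ya) := le_trans hsq' h1
        have h4 : η ≤ -rayR A ya := by
          rw [hη, div_le_iff₀ hrpos]
          have e1 : (-rayR A x) * (-rayR A ya) = (-rayR A ya) * (-rayR A x) := mul_comm _ _
          have e2 : (lam - 1) ^ 2 * m ^ 2 = m ^ 2 * (lam - 1) ^ 2 := mul_comm _ _
          linarith [h3]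
        have h5 : rayR A y ≤ rayR A ya := rayR_le_abs A (fun k l hkl => (hAoff k l hkl).le) y
        linarith
      have hfin := lmaxR_le hq A (-η) hbound
      rw [hzeroA] at hfin
      linarith
  -- conclude : v = 1
  by_contra hvne
  obtain ⟨k₀, hk₀⟩ : ∃ k, v k ≠ 1 := by
    by_contra hall
    push_neg at hall
    exact hvne (funext fun k => hall k)
  by_cases hex : ∃ j, v j = 1
  · obtain ⟨j, hj⟩ := hex
    have hxj : x j = 0 := by rw [hx]; simp [hj]
    have hmv0 : ∀ k, A.mulVec x k = 0 := by
      intro k; rw [hmvx k, hlameq]; ring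
    have hrayx : rayR A x = 0 := by
      rw [rayR]
      simp only [dotProduct]
      apply Finset.sum_eq_zero
      intro k _
      rw [hmv0 k, mul_zero]
    set xa : Fin q → ℝ := fun k => |x k| with hxa
    have hray_xa_ge : rayR A x ≤ rayR A xa :=
      rayR_le_abs A (fun k l hkl => (hAoff k l hkl).le) x
    have hray_xa : rayR A xa = 0 :=
      le_antisymm (hAneg xa) (by rw [← hrayx]; exact hray_xa_ge)
    have hmva := mulVec_eq_zero_of_ray_zero A hAsym hAneg xa hray_xa
    have hj0 := hmva j
    simp only [mulVec, dotProduct] at hj0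
    have hterm : ∀ l, 0 ≤ A j l * xa l := by
      intro l
      by_cases hlj : l = j
      · subst hlj
        have : xa l = 0 := by rw [hxa]; simp [hxj]
        rw [this, mul_zero]
      · exact mul_nonneg (hAoff j l (fun h => hlj h.symm)).le (abs_nonneg _)
    have hzero_each := (Finset.sum_eq_zero_iff_of_nonneg (fun l _ => hterm l)).mp hj0
    have hk0j : k₀ ≠ j := fun h => hk₀ (h ▸ hj)
    have hzk := hzero_each k₀ (Finset.mem_univ k₀)
    have hpos := hAoff j k₀ (fun h => hk0j h.symm)
    have hxk0 : |x k₀| = 0 := by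
      rcases mul_eq_zero.mp hzk with h | h
      · exact absurd h hpos.ne'
      · exact h
    apply hk₀
    have hx0 : x k₀ = 0 := abs_eq_zero.mp hxk0
    rw [hx] at hx0
    dsimp only at hx0
    rcases mul_eq_zero.mp hx0 with h | h
    · exact absurd h (Real.sqrt_pos.mpr (hc k₀)).ne'
    · linarith
  · push_neg at hex
    set w : Fin q → ℝ := fun k => (v k + 1) / 2 with hwdef2
    have hw : ∀ k, 0 < w k := fun k => by rw [hwdef2]; dsimp only; linarith [hv k]
    have hGw : ∀ k, G w k < 1 := by
      intro k
      have hsumw : ∑ l, B k l * c l * (w l - 1) = (∑ l, B k l * c l * (v l - 1)) / 2 := by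
        rw [Finset.sum_div]
        apply Finset.sum_congr rfl
        intro l _
        rw [hwdef2]
        dsimp only
        ring
      have hvk := hv k
      have hwk := hw k
      have hinv2 : (w k)⁻¹ < ((v k)⁻¹ + 1) / 2 := by
        have hnum : v k - 1 ≠ 0 := sub_ne_zero.mpr (hex k)
        have hkey : ((v k)⁻¹ + 1) / 2 - (w k)⁻¹ = (v k - 1) ^ 2 / (2 * v k * (v k + 1)) := by
          rw [hwdef2]
          dsimp only
          field_simp
          ring
        have hposq : 0 < (v k - 1) ^ 2 / (2 * v k * (v k + 1)) := by positivity
        linarith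
      have hGvk : (v k)⁻¹ + ∑ l, B k l * c l * (v l - 1) = 1 := by
        have h := hact k
        have hrfl : G v k = (v k)⁻¹ + ∑ l, B k l * c l * (v l - 1) := rfl
        rw [hrfl] at h
        rw [h, hlameq]
      show (w k)⁻¹ + ∑ l, B k l * c l * (w l - 1) < 1
      rw [hsumw]
      linarith
    have hFw : F w < 1 := by
      rw [hF]
      exact (Finset.sup'_lt_iff hne).mpr fun k _ => hGw k
    have hge := hlamle w hw
    rw [← hFv, hlameq] at hge
    linarith
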